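/- Let V be a multiplicative unitary on a finite-dimensional Hilbert space H and let f,g ∈ H satisfy V(f⊗g) = f⊗g. Then for all ξ,η ∈ H, the operators L(ω_{ξ,f}) and ρ(ω_{g,η})* commute. -/

import Mathlib

open scoped InnerProductSpace ComplexOrder

noncomputable section

namespace MU

variable {ι : Type*} [Fintype ι] [DecidableEq ι]

/-- The elementary tensor `f ⊗ g` of two vectors, in the model
`H ⊗ H = EuclideanSpace ℂ (ι × ι)`. -/
def tens (f g : EuclideanSpace ℂ ι) : EuclideanSpace ℂ (ι × ι) :=
  WithLp.toLp 2 (fun p => f p.1 * g p.2)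

/-- `g ↦ f ⊗ g` as a linear map. -/
def tensL (f : EuclideanSpace ℂ ι) :
    EuclideanSpace ℂ ι →ₗ[ℂ] EuclideanSpace ℂ (ι × ι) where
  toFun g := tens f g
  map_add' x y := by
    ext p; simp only [tens, PiLp.add_apply]; ring
  map_smul' c x := by
    ext p; simp only [tens, PiLp.smul_apply, smul_eq_mul, RingHom.id_apply]; ring

/-- `f ↦ f ⊗ g` as a linear map. -/
def tensR (g : EuclideanSpace ℂ ι) :
    EuclideanSpace ℂ ι →ₗ[ℂ] EuclideanSpace ℂ (ι × ι) where
  toFun f := tens f g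
  map_add' x y := by
    ext p; simp only [tens, PiLp.add_apply]; ring
  map_smul' c x := by
    ext p; simp only [tens, PiLp.smul_apply, smul_eq_mul, RingHom.id_apply]; ring

/-- Action of a matrix on a Euclidean space vector. -/
def appM {κ : Type*} [Fintype κ] (M : Matrix κ κ ℂ) (v : EuclideanSpace ℂ κ) :
    EuclideanSpace ℂ κ :=
  WithLp.toLp 2 (fun i => ∑ j, M i j * v j)

/-- Action of a matrix as a linear map on the Euclidean space. -/
def mact {κ : Type*} [Fintype κ] (M : Matrix κ κ ℂ) :
    EuclideanSpace ℂ κ →ₗ[ℂ] EuclideanSpace ℂ κ where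
  toFun := appM M
  map_add' x y := by
    ext i; simp only [appM, PiLp.add_apply, mul_add, Finset.sum_add_distrib]
  map_smul' c x := by
    ext i; simp only [appM, PiLp.smul_apply, smul_eq_mul, Finset.mul_sum, RingHom.id_apply]
    exact Finset.sum_congr rfl fun j _ => by ring

/-- The leg `V₁₂` on `H ⊗ H ⊗ H`. -/
def leg12 (V : Matrix (ι × ι) (ι × ι) ℂ) : Matrix (ι × ι × ι) (ι × ι × ι) ℂ :=
  fun p q => V (p.1, p.2.1) (q.1, q.2.1) * (if p.2.2 = q.2.2 then 1 else 0)

/-- The leg `V₁₃` on `H ⊗ H ⊗ H`. -/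
def leg13 (V : Matrix (ι × ι) (ι × ι) ℂ) : Matrix (ι × ι × ι) (ι × ι × ι) ℂ :=
  fun p q => V (p.1, p.2.2) (q.1, q.2.2) * (if p.2.1 = q.2.1 then 1 else 0)

/-- The leg `V₂₃` on `H ⊗ H ⊗ H`. -/
def leg23 (V : Matrix (ι × ι) (ι × ι) ℂ) : Matrix (ι × ι × ι) (ι × ι × ι) ℂ :=
  fun p q => V (p.2.1, p.2.2) (q.2.1, q.2.2) * (if p.1 = q.1 then 1 else 0)

/-- The pentagon equation `V₁₂ V₁₃ V₂₃ = V₂₃ V₁₂`. -/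
def Pentagon (V : Matrix (ι × ι) (ι × ι) ℂ) : Prop :=
  leg12 V * leg13 V * leg23 V = leg23 V * leg12 V

/-- `V` is a multiplicative unitary: a unitary satisfying the pentagon equation. -/
def IsMU (V : Matrix (ι × ι) (ι × ι) ℂ) : Prop :=
  V * V.conjTranspose = 1 ∧ V.conjTranspose * V = 1 ∧ Pentagon V

/-- `ξ` is a fixed vector for `V`. -/
def Fixed (V : Matrix (ι × ι) (ι × ι) ℂ) (ξ : EuclideanSpace ℂ ι) : Prop :=
  ∀ η, mact V (tens ξ η) = tens ξ η

/-- `ξ` is a cofixed vector for `V`. -/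
def Cofixed (V : Matrix (ι × ι) (ι × ι) ℂ) (ξ : EuclideanSpace ℂ ι) : Prop :=
  ∀ η, mact V (tens η ξ) = tens η ξ

/-- `V` has multiplicity 1, with fixed unit vector `e` and cofixed unit vector `eHat`. -/
def Mult1 (V : Matrix (ι × ι) (ι × ι) ℂ) (e eHat : EuclideanSpace ℂ ι) : Prop :=
  ‖e‖ = 1 ∧ ‖eHat‖ = 1 ∧ Fixed V e ∧ Cofixed V eHat ∧
    (∀ ξ, Fixed V ξ → ∃ c : ℂ, ξ = c • e) ∧
    (∀ ξ, Cofixed V ξ → ∃ c : ℂ, ξ = c • eHat)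

/-- A pre-subgroup of `V` (with fixed vector `e`): a unit vector `f` with
`⟨f,e⟩ > 0` and `V(f⊗f) = f⊗f`. -/
def IsPreSubgroup (V : Matrix (ι × ι) (ι × ι) ℂ) (e f : EuclideanSpace ℂ ι) : Prop :=
  ‖f‖ = 1 ∧ 0 < ⟪f, e⟫_ℂ ∧ mact V (tens f f) = tens f f

/-- The subspace `H^f = {η : V(f⊗η) = f⊗η}`. -/
def subUp (V : Matrix (ι × ι) (ι × ι) ℂ) (f : EuclideanSpace ℂ ι) :
    Submodule ℂ (EuclideanSpace ℂ ι) :=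
  LinearMap.ker ((mact V).comp (tensL f) - tensL f)

/-- The subspace `H_f = {η : V(η⊗f) = η⊗f}`. -/
def subDown (V : Matrix (ι × ι) (ι × ι) ℂ) (f : EuclideanSpace ℂ ι) :
    Submodule ℂ (EuclideanSpace ℂ ι) :=
  LinearMap.ker ((mact V).comp (tensR f) - tensR f)

/-- The slice `L(ω_{ξ,η}) = (ω_{ξ,η} ⊗ id)(V)`. -/
def Lslice (V : Matrix (ι × ι) (ι × ι) ℂ) (ξ η : EuclideanSpace ℂ ι) : Matrix ι ι ℂ :=
  fun a b => ∑ x, ∑ y, (starRingEnd ℂ) (ξ x) * η y * V (x, a) (y, b)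

/-- The slice `ρ(ω_{ξ,η}) = (id ⊗ ω_{ξ,η})(V)`. -/
def Rslice (V : Matrix (ι × ι) (ι × ι) ℂ) (ξ η : EuclideanSpace ℂ ι) : Matrix ι ι ℂ :=
  fun a b => ∑ x, ∑ y, (starRingEnd ℂ) (ξ x) * η y * V (a, x) (b, y)

/-- The slice `L(ω) = (ω ⊗ id)(V)` of a general linear functional `ω` on `L(H)`. -/
def LslF (V : Matrix (ι × ι) (ι × ι) ℂ) (ω : Matrix ι ι ℂ →ₗ[ℂ] ℂ) : Matrix ι ι ℂ :=
  fun a b => ω (fun x y => V (x, a) (y, b))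

/-- A state on `L(H)`: a unital positive linear functional. -/
def IsState (ω : Matrix ι ι ℂ →ₗ[ℂ] ℂ) : Prop :=
  ω 1 = 1 ∧ ∀ M : Matrix ι ι ℂ, M.PosSemidef → ∃ r : ℝ, 0 ≤ r ∧ ω M = r


section Aux
open scoped Matrix
set_option linter.unusedSectionVars false
variable {ι : Type*} [Fintype ι] [DecidableEq ι]

lemma leg12_mul (A B : Matrix (ι × ι) (ι × ι) ℂ) :
    leg12 (A * B) = leg12 A * leg12 B := by
  ext p q
  simp only [leg12, Matrix.mul_apply, Fintype.sum_prod_type]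
  simp [mul_ite, ite_mul, Finset.mul_sum, Finset.sum_mul, Finset.sum_ite_eq,
    Finset.sum_ite_eq']

lemma leg23_mul (A B : Matrix (ι × ι) (ι × ι) ℂ) :
    leg23 (A * B) = leg23 A * leg23 B := by
  ext p q
  simp only [leg23, Matrix.mul_apply, Fintype.sum_prod_type]
  simp [mul_ite, ite_mul, Finset.mul_sum, Finset.sum_mul, Finset.sum_ite_eq,
    Finset.sum_ite_eq']

lemma leg23_one : leg23 (1 : Matrix (ι × ι) (ι × ι) ℂ) = 1 := by
  ext p q
  simp only [leg23, Matrix.one_apply, Prod.ext_iff]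
  rcases p with ⟨p1, p2, p3⟩; rcases q with ⟨q1, q2, q3⟩
  by_cases h1 : p1 = q1 <;> by_cases h2 : p2 = q2 <;> by_cases h3 : p3 = q3 <;>
    simp [h1, h2, h3]

lemma leg23_conjTranspose (A : Matrix (ι × ι) (ι × ι) ℂ) :
    leg23 Aᴴ = (leg23 A)ᴴ := by
  ext p q
  simp only [leg23, Matrix.conjTranspose_apply, map_mul]
  by_cases h : p.1 = q.1
  · simp [h]
  · have h' : ¬ q.1 = p.1 := fun hh => h hh.symm
    simp [h, h']

lemma key_identity (V : Matrix (ι × ι) (ι × ι) ℂ) (hV : IsMU V) :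
    leg12 V * leg23 Vᴴ = leg23 Vᴴ * leg12 V * leg13 V := by
  have h1 : leg23 Vᴴ * leg23 V = 1 := by
    rw [← leg23_mul, hV.2.1, leg23_one]
  have h2 : leg23 V * leg23 Vᴴ = 1 := by
    rw [← leg23_mul, hV.1, leg23_one]
  have pent := hV.2.2
  unfold Pentagon at pent
  calc leg12 V * leg23 Vᴴ
      = leg23 Vᴴ * (leg23 V * leg12 V) * leg23 Vᴴ := by
        rw [← Matrix.mul_assoc, h1, Matrix.one_mul]
    _ = leg23 Vᴴ * (leg12 V * leg13 V * leg23 V) * leg23 Vᴴ := by rw [pent]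
    _ = leg23 Vᴴ * leg12 V * leg13 V := by
        rw [Matrix.mul_assoc (leg23 Vᴴ), Matrix.mul_assoc (leg12 V * leg13 V),
          h2, Matrix.mul_one, ← Matrix.mul_assoc, Matrix.mul_assoc (leg23 Vᴴ)]

end Aux
section Aux2
open scoped Matrix
set_option linter.unusedSectionVars false
variable {ι : Type*} [Fintype ι] [DecidableEq ι]

/-- the vector `u ⊗ e_m ⊗ v` in `H ⊗ H ⊗ H`. -/
def wvec (u : EuclideanSpace ℂ ι) (m : ι) (v : EuclideanSpace ℂ ι) : ι × ι × ι → ℂ :=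
  fun p => u p.1 * (if p.2.1 = m then 1 else 0) * v p.2.2

def Ssum (M : Matrix (ι × ι × ι) (ι × ι × ι) ℂ) (ξ η f g : EuclideanSpace ℂ ι)
    (a c : ι) : ℂ :=
  ∑ p, ∑ q, (starRingEnd ℂ) (wvec ξ a η p) * wvec f c g q * M p q

end Aux2
section Aux3
open scoped Matrix
set_option linter.unusedSectionVars false
variable {ι : Type*} [Fintype ι] [DecidableEq ι]

lemma Ssum_eq (M : Matrix (ι × ι × ι) (ι × ι × ι) ℂ) (ξ η f g : EuclideanSpace ℂ ι) (a c : ι) :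
    Ssum M ξ η f g a c = ∑ x, ∑ u, ∑ y, ∑ w,
      (starRingEnd ℂ) (ξ x) * (starRingEnd ℂ) (η u) * (f y * g w) * M (x, a, u) (y, c, w) := by
  unfold Ssum wvec
  simp only [Fintype.sum_prod_type, map_mul, map_zero, apply_ite (starRingEnd ℂ), ite_mul, mul_ite,
    one_mul, mul_one, zero_mul, mul_zero, Finset.sum_ite_eq, Finset.sum_ite_eq',
    Finset.mem_univ, if_true, Finset.sum_ite_irrel, Finset.sum_const_zero, map_one]

end Aux3
section Aux4
open scoped Matrix
set_option linter.unusedSectionVars false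
variable {ι : Type*} [Fintype ι] [DecidableEq ι]

lemma rotL2 {α β : Type*} [Fintype α] [Fintype β] (F : α → β → ℂ) :
    ∑ a, ∑ b, F a b = ∑ b, ∑ a, F a b := Finset.sum_comm

lemma rotL3 {α β γ : Type*} [Fintype α] [Fintype β] [Fintype γ] (F : α → β → γ → ℂ) :
    ∑ a, ∑ b, ∑ c, F a b c = ∑ b, ∑ c, ∑ a, F a b c := by
  rw [Finset.sum_comm]
  exact Finset.sum_congr rfl fun b _ => Finset.sum_comm

lemma rotL4 {α β γ δ : Type*} [Fintype α] [Fintype β] [Fintype γ] [Fintype δ]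
    (F : α → β → γ → δ → ℂ) :
    ∑ a, ∑ b, ∑ c, ∑ d, F a b c d = ∑ b, ∑ c, ∑ d, ∑ a, F a b c d := by
  rw [Finset.sum_comm]
  exact Finset.sum_congr rfl fun b _ => rotL3 _

lemma rotL5 {α β γ δ ε : Type*} [Fintype α] [Fintype β] [Fintype γ] [Fintype δ] [Fintype ε]
    (F : α → β → γ → δ → ε → ℂ) :
    ∑ a, ∑ b, ∑ c, ∑ d, ∑ e, F a b c d e = ∑ b, ∑ c, ∑ d, ∑ e, ∑ a, F a b c d e := by
  rw [Finset.sum_comm]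
  exact Finset.sum_congr rfl fun b _ => rotL4 _

lemma fix13 (V : Matrix (ι × ι) (ι × ι) ℂ) (f g : EuclideanSpace ℂ ι)
    (hfg : mact V (tens f g) = tens f g) (c : ι) (p : ι × ι × ι) :
    ∑ q, leg13 V p q * wvec f c g q = wvec f c g p := by
  have h : ∀ j : ι × ι, ∑ i : ι × ι, V j i * (f i.1 * g i.2) = f j.1 * g j.2 :=
    fun j => congrArg (fun v : EuclideanSpace ℂ (ι × ι) => WithLp.ofLp v j) hfg
  have h2 : ∑ y, ∑ w, V (p.1, p.2.2) (y, w) * (f y * g w) = f p.1 * g p.2.2 := by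
    have := h (p.1, p.2.2); rwa [Fintype.sum_prod_type] at this
  unfold leg13 wvec
  simp only [Fintype.sum_prod_type, ite_mul, mul_ite, one_mul, mul_one, zero_mul, mul_zero,
    Finset.sum_ite_eq, Finset.sum_ite_eq', Finset.mem_univ, if_true, Finset.sum_ite_irrel,
    Finset.sum_const_zero]
  rw [h2]

lemma S_mul13 (V : Matrix (ι × ι) (ι × ι) ℂ) (f g ξ η : EuclideanSpace ℂ ι)
    (hfg : mact V (tens f g) = tens f g) (M : Matrix (ι × ι × ι) (ι × ι × ι) ℂ) (a c : ι) :
    Ssum (M * leg13 V) ξ η f g a c = Ssum M ξ η f g a c := by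
  unfold Ssum
  refine Finset.sum_congr rfl fun p _ => ?_
  calc ∑ q, (starRingEnd ℂ) (wvec ξ a η p) * wvec f c g q * (M * leg13 V) p q
      = ∑ q, ∑ r, (starRingEnd ℂ) (wvec ξ a η p) * (M p r * (leg13 V r q * wvec f c g q)) := by
        refine Finset.sum_congr rfl fun q _ => ?_
        rw [Matrix.mul_apply, Finset.mul_sum]
        refine Finset.sum_congr rfl fun r _ => by ring
    _ = ∑ r, ∑ q, (starRingEnd ℂ) (wvec ξ a η p) * (M p r * (leg13 V r q * wvec f c g q)) :=
        Finset.sum_comm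
    _ = ∑ r, (starRingEnd ℂ) (wvec ξ a η p) * (M p r * ∑ q, leg13 V r q * wvec f c g q) := by
        refine Finset.sum_congr rfl fun r _ => ?_
        rw [Finset.mul_sum, Finset.mul_sum]
    _ = ∑ r, (starRingEnd ℂ) (wvec ξ a η p) * wvec f c g r * M p r := by
        refine Finset.sum_congr rfl fun r _ => ?_
        rw [fix13 V f g hfg c r]; ring
end Aux4
section Aux5
open scoped Matrix
set_option linter.unusedSectionVars false
variable {ι : Type*} [Fintype ι] [DecidableEq ι]

lemma SsumM1 (V : Matrix (ι × ι) (ι × ι) ℂ) (ξ η f g : EuclideanSpace ℂ ι) (a c : ι) :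
    Ssum (leg12 V * leg23 Vᴴ) ξ η f g a c =
      ∑ x, ∑ u, ∑ y, ∑ w, ∑ k,
        star (ξ x) * star (η u) * (f y * g w) * (V (x, a) (y, k) * star (V (c, w) (k, u))) := by
  rw [Ssum_eq]
  simp only [Matrix.mul_apply, leg12, leg23, Matrix.conjTranspose_apply, Fintype.sum_prod_type,
    ite_mul, mul_ite, one_mul, mul_one, zero_mul, mul_zero, Finset.sum_ite_eq, Finset.sum_ite_eq',
    Finset.mem_univ, if_true, Finset.sum_ite_irrel, Finset.sum_const_zero, Finset.mul_sum,
    starRingEnd_apply, star_star]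

lemma SsumM2 (V : Matrix (ι × ι) (ι × ι) ℂ) (ξ η f g : EuclideanSpace ℂ ι) (a c : ι) :
    Ssum (leg23 Vᴴ * leg12 V) ξ η f g a c =
      ∑ x, ∑ u, ∑ y, ∑ w, ∑ k,
        star (ξ x) * star (η u) * (f y * g w) * (star (V (k, w) (a, u)) * V (x, k) (y, c)) := by
  rw [Ssum_eq]
  simp only [Matrix.mul_apply, leg12, leg23, Matrix.conjTranspose_apply, Fintype.sum_prod_type,
    ite_mul, mul_ite, one_mul, mul_one, zero_mul, mul_zero, Finset.sum_ite_eq, Finset.sum_ite_eq',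
    Finset.mem_univ, if_true, Finset.sum_ite_irrel, Finset.sum_const_zero, Finset.mul_sum,
    starRingEnd_apply, star_star]

lemma entryA (V : Matrix (ι × ι) (ι × ι) ℂ) (ξ η f g : EuclideanSpace ℂ ι) (a c : ι) :
    (Lslice V ξ f * (Rslice V g η).conjTranspose) a c =
      Ssum (leg12 V * leg23 Vᴴ) ξ η f g a c := by
  rw [SsumM1]
  simp only [Matrix.mul_apply, Lslice, Rslice, Matrix.conjTranspose_apply, star_sum, star_mul',
    star_star, map_sum, map_mul, Finset.sum_mul, Finset.mul_sum, starRingEnd_apply]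
  refine Eq.trans (rotL5 _) ?_
  refine Eq.trans (rotL4 _) ?_
  refine Eq.trans Finset.sum_comm ?_
  refine Finset.sum_congr rfl fun x _ => Finset.sum_congr rfl fun u _ =>
    Finset.sum_congr rfl fun y _ => Finset.sum_congr rfl fun w _ =>
      Finset.sum_congr rfl fun k _ => by ring

lemma entryB (V : Matrix (ι × ι) (ι × ι) ℂ) (ξ η f g : EuclideanSpace ℂ ι) (a c : ι) :
    ((Rslice V g η).conjTranspose * Lslice V ξ f) a c =
      Ssum (leg23 Vᴴ * leg12 V) ξ η f g a c := by
  rw [SsumM2]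
  simp only [Matrix.mul_apply, Lslice, Rslice, Matrix.conjTranspose_apply, star_sum, star_mul',
    star_star, map_sum, map_mul, Finset.sum_mul, Finset.mul_sum, starRingEnd_apply]
  refine Eq.trans (rotL5 _) ?_
  refine Finset.sum_congr rfl fun x _ => Eq.trans (rotL3 _) (Eq.trans (rotL3 _) ?_)
  refine Finset.sum_congr rfl fun u _ =>
    Finset.sum_congr rfl fun y _ => Finset.sum_congr rfl fun w _ =>
      Finset.sum_congr rfl fun k _ => by ring
end Aux5

/-- if `V(f⊗g) = f⊗g` then `L(ω_ξf)` and `ρ(ω_gη)*` commute. -/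
theorem Lslice_commutes_Rslice_star {ι : Type*} [Fintype ι] [DecidableEq ι] [Nonempty ι]
    (V : Matrix (ι × ι) (ι × ι) ℂ) (hV : IsMU V)
    (f g : EuclideanSpace ℂ ι) (hfg : mact V (tens f g) = tens f g)
    (ξ η : EuclideanSpace ℂ ι) :
    Lslice V ξ f * (Rslice V g η).conjTranspose =
      (Rslice V g η).conjTranspose * Lslice V ξ f := by
  ext a c
  rw [entryA, entryB, key_identity V hV, S_mul13 V f g ξ η hfg]

end MU
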